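/- arXiv:1409.0584 — 2 statements merged into one kernel-verified Lean document; each statement's English description precedes it below -/
import Mathlib

section
/- The function g(x) = x·H(1/2 − 1/x), defined for x > 2 where H is the binary entropy function, is concave. Consequently, for fixed x > 2 and all ε with |ε| small enough that both arguments stay in the domain, f(ε) = g(x+ε) + g(x−ε) is maximized at ε = 0. -/
open Set

noncomputable def binEntropy (p : ℝ) : ℝ :=
  -(p * Real.logb 2 p) - (1 - p) * Real.logb 2 (1 - p)

noncomputable def gFun (x : ℝ) : ℝ := x * binEntropy (1/2 - 1/x)

noncomputable def Gf (x : ℝ) : ℝ :=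
  x * Real.log 2 + x * Real.log x - (x/2 - 1) * Real.log (x - 2) - (x/2 + 1) * Real.log (x + 2)

noncomputable def Gf' (x : ℝ) : ℝ :=
  Real.log 2 + Real.log x - (1/2) * Real.log (x - 2) - (1/2) * Real.log (x + 2)

lemma hasDerivAt_Gf {x : ℝ} (hx : 2 < x) : HasDerivAt Gf (Gf' x) x := by
  have hx0 : x ≠ 0 := by linarith
  have hxm : x - 2 ≠ 0 := by linarith
  have hxp : x + 2 ≠ 0 := by linarith
  have h1 : HasDerivAt (fun y : ℝ => y * Real.log 2) (Real.log 2) x := by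
    simpa using (hasDerivAt_id x).mul_const (Real.log 2)
  have h2 : HasDerivAt (fun y : ℝ => y * Real.log y) (Real.log x + 1) x :=
    Real.hasDerivAt_mul_log hx0
  have h3 : HasDerivAt (fun y : ℝ => (y/2 - 1) * Real.log (y - 2))
      ((1/2) * Real.log (x - 2) + (x/2 - 1) * (1/(x - 2))) x := by
    have ha : HasDerivAt (fun y : ℝ => y/2 - 1) (1/2) x := by
      simpa using ((hasDerivAt_id x).div_const 2).sub_const 1
    have hb : HasDerivAt (fun y : ℝ => Real.log (y - 2)) (1/(x - 2)) x := by
      have := (Real.hasDerivAt_log hxm).comp x ((hasDerivAt_id x).sub_const 2)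
      simpa [one_div, Function.comp_def] using this
    simpa [Pi.mul_def] using ha.mul hb
  have h4 : HasDerivAt (fun y : ℝ => (y/2 + 1) * Real.log (y + 2))
      ((1/2) * Real.log (x + 2) + (x/2 + 1) * (1/(x + 2))) x := by
    have ha : HasDerivAt (fun y : ℝ => y/2 + 1) (1/2) x := by
      simpa using ((hasDerivAt_id x).div_const 2).add_const 1
    have hb : HasDerivAt (fun y : ℝ => Real.log (y + 2)) (1/(x + 2)) x := by
      have := (Real.hasDerivAt_log hxp).comp x ((hasDerivAt_id x).add_const 2)
      simpa [one_div, Function.comp_def] using this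
    simpa [Pi.mul_def] using ha.mul hb
  have h := ((h1.add h2).sub h3).sub h4
  have he : Real.log 2 + (Real.log x + 1)
      - ((1/2) * Real.log (x - 2) + (x/2 - 1) * (1/(x - 2)))
      - ((1/2) * Real.log (x + 2) + (x/2 + 1) * (1/(x + 2))) = Gf' x := by
    unfold Gf'
    field_simp
    ring
  rw [he] at h
  exact h.congr_deriv rfl

lemma hasDerivAt_Gf' {x : ℝ} (hx : 2 < x) :
    HasDerivAt Gf' (1/x - 1/(2*(x - 2)) - 1/(2*(x + 2))) x := by
  have hx0 : x ≠ 0 := by linarith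
  have hxm : x - 2 ≠ 0 := by linarith
  have hxp : x + 2 ≠ 0 := by linarith
  have h2 : HasDerivAt (fun y : ℝ => Real.log y) (1/x) x := by
    simpa [one_div] using Real.hasDerivAt_log hx0
  have h3 : HasDerivAt (fun y : ℝ => (1/2 : ℝ) * Real.log (y - 2)) (1/(2*(x-2))) x := by
    have hb : HasDerivAt (fun y : ℝ => Real.log (y - 2)) (1/(x - 2)) x := by
      have := (Real.hasDerivAt_log hxm).comp x ((hasDerivAt_id x).sub_const 2)
      simpa [one_div, Function.comp_def] using this
    have := hb.const_mul (1/2 : ℝ)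
    exact this.congr_deriv (one_div_mul_one_div _ _)
  have h4 : HasDerivAt (fun y : ℝ => (1/2 : ℝ) * Real.log (y + 2)) (1/(2*(x+2))) x := by
    have hb : HasDerivAt (fun y : ℝ => Real.log (y + 2)) (1/(x + 2)) x := by
      have := (Real.hasDerivAt_log hxp).comp x ((hasDerivAt_id x).add_const 2)
      simpa [one_div, Function.comp_def] using this
    have := hb.const_mul (1/2 : ℝ)
    exact this.congr_deriv (one_div_mul_one_div _ _)
  have h1 : HasDerivAt (fun _ : ℝ => Real.log 2) 0 x := hasDerivAt_const x _
  have h := ((h1.add h2).sub h3).sub h4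
  simp only [Pi.add_def, Pi.sub_def] at h
  unfold Gf'
  exact h.congr_deriv (by ring)

lemma Gf_strictConcave : StrictConcaveOn ℝ (Set.Ioi (2:ℝ)) Gf := by
  apply strictConcaveOn_of_deriv2_neg (convex_Ioi 2)
  · exact fun x hx => (hasDerivAt_Gf hx).continuousAt.continuousWithinAt
  · intro x hx
    rw [interior_Ioi] at hx
    have hd : deriv Gf =ᶠ[nhds x] Gf' := by
      filter_upwards [isOpen_Ioi.mem_nhds hx] with y hy
      exact (hasDerivAt_Gf hy).deriv
    have hmem := mem_Ioi.mp hx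
    have h2 : deriv^[2] Gf x = 1/x - 1/(2*(x - 2)) - 1/(2*(x + 2)) := by
      rw [show deriv^[2] Gf = deriv (deriv Gf) from rfl, hd.deriv_eq,
        (hasDerivAt_Gf' hx).deriv]
    rw [h2]
    have hx0 : (0:ℝ) < x := by linarith
    have hxm : (0:ℝ) < x - 2 := by linarith
    have hxp : (0:ℝ) < x + 2 := by linarith
    have key : 1/x - 1/(2*(x - 2)) - 1/(2*(x + 2)) = -4/(x*((x-2)*(x+2))) := by
      field_simp
      ring
    rw [key]
    apply div_neg_of_neg_of_pos (by norm_num)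
    positivity

lemma gFun_eq {x : ℝ} (hx : 2 < x) : gFun x = Gf x / Real.log 2 := by
  have hx0 : x ≠ 0 := by linarith
  have hxm : x - 2 ≠ 0 := by linarith
  have hxp : x + 2 ≠ 0 := by linarith
  have hL2 : Real.log 2 ≠ 0 := ne_of_gt (Real.log_pos (by norm_num))
  have hp : (1:ℝ)/2 - 1/x = (x - 2)/(2*x) := by field_simp
  have h1p : 1 - (x - 2)/(2*x) = (x + 2)/(2*x) := by field_simp; ring
  have hlp : Real.log ((x - 2)/(2*x)) = Real.log (x - 2) - (Real.log 2 + Real.log x) := by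
    rw [Real.log_div hxm (by simpa using hx0), Real.log_mul (by norm_num) hx0]
  have hlq : Real.log ((x + 2)/(2*x)) = Real.log (x + 2) - (Real.log 2 + Real.log x) := by
    rw [Real.log_div hxp (by simpa using hx0), Real.log_mul (by norm_num) hx0]
  unfold gFun binEntropy Gf
  rw [hp, h1p, Real.logb, Real.logb, hlp, hlq]
  field_simp
  ring

theorem gFun_concave :
    (∀ s t : ℝ, 2 < s → 2 < t → (gFun s + gFun t) / 2 ≤ gFun ((s + t) / 2)) ∧
    (∀ x ε : ℝ, 2 < x → 2 < x - |ε| → gFun (x + ε) + gFun (x - ε) ≤ 2 * gFun x) := by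
  have key : ∀ s t : ℝ, 2 < s → 2 < t → (gFun s + gFun t) / 2 ≤ gFun ((s + t) / 2) := by
    intro s t hs ht
    have hm : 2 < (s + t) / 2 := by linarith
    have hc := Gf_strictConcave.concaveOn.2 (mem_Ioi.mpr hs) (mem_Ioi.mpr ht)
      (by norm_num : (0:ℝ) ≤ 1/2) (by norm_num : (0:ℝ) ≤ 1/2) (by norm_num)
    simp only [smul_eq_mul] at hc
    have hc' : (Gf s + Gf t) / 2 ≤ Gf ((s + t) / 2) := by
      have : (1:ℝ)/2 * s + 1/2 * t = (s + t)/2 := by ring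
      rw [this] at hc
      linarith
    rw [gFun_eq hs, gFun_eq ht, gFun_eq hm]
    have hL2 : (0:ℝ) < Real.log 2 := Real.log_pos (by norm_num)
    rw [← add_div, div_div]
    rw [div_le_div_iff₀ (by positivity) hL2]
    calc (Gf s + Gf t) * Real.log 2 = ((Gf s + Gf t)/2) * (2 * Real.log 2) := by ring
      _ ≤ Gf ((s + t)/2) * (2 * Real.log 2) := by
          apply mul_le_mul_of_nonneg_right hc' (by positivity)
      _ = Gf ((s + t) / 2) * (Real.log 2 * 2) := by ring
  refine ⟨key, ?_⟩
  intro x ε hx hxe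
  have h1 : 2 < x + ε := by
    have := abs_le.mp (le_refl |ε|)
    have := neg_abs_le ε
    linarith
  have h2 : 2 < x - ε := by
    have := le_abs_self ε
    linarith
  have := key (x + ε) (x - ε) h1 h2
  have hmid : (x + ε + (x - ε)) / 2 = x := by ring
  rw [hmid] at this
  linarith
end

section
/- For b = 2, the critical slope α = (4/√3)·(2 − H(1/2 − √3/4)) satisfies α = H'(1/2 − √3/4), where H' is the derivative of the binary entropy function; i.e., (4/√3)·(2 − H(1/2 − √3/4)) = log₂((1/2 + √3/4)/(1/2 − √3/4)). -/
theorem alpha_eq_deriv_entropy :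
    (4 / Real.sqrt 3) * (2 - binEntropy (1/2 - Real.sqrt 3 / 4))
      = Real.logb 2 ((1/2 + Real.sqrt 3 / 4) / (1/2 - Real.sqrt 3 / 4)) := by
  have hs : Real.sqrt 3 ^ 2 = 3 := Real.sq_sqrt (by norm_num)
  have hs0 : (0:ℝ) < Real.sqrt 3 := Real.sqrt_pos.mpr (by norm_num)
  have hslt : Real.sqrt 3 < 2 := by
    nlinarith [hs, hs0]
  set p : ℝ := 1/2 - Real.sqrt 3 / 4 with hp
  set q : ℝ := 1/2 + Real.sqrt 3 / 4 with hq
  have hp0 : 0 < p := by rw [hp]; linarith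
  have hq0 : 0 < q := by rw [hq]; linarith
  have hpq : q * p = 1/16 := by rw [hp, hq]; nlinarith [hs]
  have h1p : 1 - p = q := by rw [hp, hq]; ring
  have hlog16 : Real.logb 2 (1/16 : ℝ) = -4 := by
    have : (1/16 : ℝ) = 2 ^ (-4 : ℝ) := by
      rw [Real.rpow_neg (by norm_num)]; norm_num
    rw [this, Real.logb_rpow (by norm_num) (by norm_num)]
  have hsum : Real.logb 2 q + Real.logb 2 p = -4 := by
    rw [← Real.logb_mul (ne_of_gt hq0) (ne_of_gt hp0), hpq, hlog16]
  have hdiv : Real.logb 2 (q / p) = Real.logb 2 q - Real.logb 2 p :=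
    Real.logb_div (ne_of_gt hq0) (ne_of_gt hp0)
  rw [binEntropy, h1p, hdiv]
  have ha : Real.logb 2 p = -4 - Real.logb 2 q := by linarith
  rw [ha]
  have hsne : Real.sqrt 3 ≠ 0 := ne_of_gt hs0
  rw [hp, hq]
  field_simp
  nlinarith [hs, hs0]
end
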